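/- Let K ∈ ℝ^{n×n} be a skew-symmetric matrix (Kᵀ = −K). Then there exists a vector x ∈ ℝⁿ with Kx ≥ 0 (entrywise), x ≥ 0 (entrywise), and x + Kx > 0 (entrywise). -/

import Mathlib

open Finset
open scoped InnerProductSpace

section ConeClosed
variable {E : Type*} [NormedAddCommGroup E] [NormedSpace ℝ E] [FiniteDimensional ℝ E]
variable {ι : Type*} [Fintype ι] [DecidableEq ι]

/-- Conical combinations of the vectors `v i`, `i ∈ s`. -/
def coneSet (v : ι → E) (s : Finset ι) : Set E :=
  {x | ∃ c : ι → ℝ, (∀ i, 0 ≤ c i) ∧ x = ∑ i ∈ s, c i • v i}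

lemma coneSet_isClosed (v : ι → E) (s : Finset ι) : IsClosed (coneSet v s) := by
  classical
  induction s using Finset.strongInductionOn with
  | _ s ih =>
    by_cases hli : LinearIndependent ℝ (fun i : {x // x ∈ s} => v i)
    · -- independent: closed image of the nonnegative orthant under a closed embedding
      set L : ({x // x ∈ s} → ℝ) →ₗ[ℝ] E :=
        { toFun := fun c => ∑ i, c i • v i.1
          map_add' := by intro a b; simp [add_smul, Finset.sum_add_distrib]
          map_smul' := by intro m a; simp [smul_smul, Finset.smul_sum] } with hL
      have hker : LinearMap.ker L = ⊥ := by
        rw [LinearMap.ker_eq_bot']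
        intro c hc
        have hc' : ∑ i, c i • v i.1 = 0 := hc
        funext i
        exact Fintype.linearIndependent_iff.mp hli c hc' i
      have hembed := LinearMap.isClosedEmbedding_of_injective (f := L) hker
      have heq : coneSet v s = L '' {c | ∀ i, 0 ≤ c i} := by
        ext x
        constructor
        · rintro ⟨c, hc, rfl⟩
          refine ⟨fun i => c i.1, fun i => hc i.1, ?_⟩
          show ∑ i : {x // x ∈ s}, c i.1 • v i.1 = _
          rw [← Finset.sum_attach s (fun i => c i • v i)]
          rfl
        · rintro ⟨c, hc, rfl⟩
          refine ⟨fun i => if h : i ∈ s then c ⟨i, h⟩ else 0, ?_, ?_⟩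
          · intro i
            by_cases h : i ∈ s
            · simpa [h] using hc ⟨i, h⟩
            · simp [h]
          · show _ = ∑ i ∈ s, (if h : i ∈ s then c ⟨i, h⟩ else 0) • v i
            rw [← Finset.sum_attach s (fun i => (if h : i ∈ s then c ⟨i, h⟩ else 0) • v i)]
            show ∑ i : {x // x ∈ s}, c i • v i.1 = _
            refine Finset.sum_congr rfl ?_
            rintro ⟨i, hi⟩ -
            simp [hi]
      rw [heq]
      refine hembed.isClosedMap _ ?_
      have : {c : {x // x ∈ s} → ℝ | ∀ i, 0 ≤ c i} = ⋂ i, {c | 0 ≤ c i} := by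
        ext c; simp [Set.mem_iInter]
      rw [this]
      exact isClosed_iInter fun i => isClosed_le continuous_const (continuous_apply i)
    · -- dependent: reduce to a finite union of smaller cones
      obtain ⟨d₀, hd₀sum, j, hj⟩ := Fintype.not_linearIndependent_iff.mp hli
      -- arrange a negative coefficient at j
      set d₁ : {x // x ∈ s} → ℝ := if d₀ j < 0 then d₀ else -d₀ with hd₁
      have hd₁sum : ∑ i, d₁ i • v i.1 = 0 := by
        by_cases h : d₀ j < 0
        · rw [hd₁, if_pos h]; exact hd₀sum
        · rw [hd₁, if_neg h]
          have hneg : ∀ i : {x // x ∈ s}, (-d₀) i • v i.1 = -(d₀ i • v i.1) := fun i => by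
            simp [neg_smul]
          rw [Finset.sum_congr rfl (fun i _ => hneg i), Finset.sum_neg_distrib, hd₀sum,
            neg_zero]
      have hd₁j : d₁ j < 0 := by
        by_cases h : d₀ j < 0
        · simpa [hd₁, h] using h
        · have : 0 < d₀ j := lt_of_le_of_ne (not_lt.mp h) (Ne.symm hj)
          simpa [hd₁, h] using this
      set d : ι → ℝ := fun i => if h : i ∈ s then d₁ ⟨i, h⟩ else 0 with hd
      have hdsum : ∑ i ∈ s, d i • v i = 0 := by
        rw [← Finset.sum_attach s (fun i => d i • v i)]
        rw [← hd₁sum]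
        refine Finset.sum_congr rfl ?_
        rintro ⟨i, hi⟩ -
        simp [hd, hi]
      set T : Finset ι := s.filter (fun i => d i < 0) with hT
      have hTne : T.Nonempty := ⟨j.1, Finset.mem_filter.mpr ⟨j.2, by simp [hd, j.2, hd₁j]⟩⟩
      have hTs : ∀ i ∈ T, i ∈ s := fun i hi => (Finset.mem_filter.mp hi).1
      have key : coneSet v s = ⋃ i ∈ T, coneSet v (s.erase i) := by
        ext x
        constructor
        · rintro ⟨c, hc, rfl⟩
          set f : ι → ℝ := fun i => c i / (-d i) with hf
          set t : ℝ := T.inf' hTne f with htdef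
          obtain ⟨i₀, hi₀T, hti₀⟩ := Finset.exists_mem_eq_inf' hTne f
          have hdi₀ : d i₀ < 0 := (Finset.mem_filter.mp hi₀T).2
          have ht0 : 0 ≤ t := by
            refine Finset.le_inf' hTne f ?_
            intro i hi
            have hdi : d i < 0 := (Finset.mem_filter.mp hi).2
            exact div_nonneg (hc i) (by linarith)
          set c' : ι → ℝ := fun i => if i ∈ s then c i + t * d i else 0 with hc'
          have hfd : ∀ i, d i < 0 → f i * d i = -c i := by
            intro i hdi
            have : d i ≠ 0 := ne_of_lt hdi
            field_simp [hf]
            show c i / -d i * d i = -c i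
            rw [div_neg, neg_mul, div_mul_cancel₀ _ this]
          have hc'nn : ∀ i, 0 ≤ c' i := by
            intro i
            by_cases his : i ∈ s
            · by_cases hdi : d i < 0
              · have hiT : i ∈ T := Finset.mem_filter.mpr ⟨his, hdi⟩
                have hle : t ≤ f i := Finset.inf'_le f hiT
                have : f i * d i ≤ t * d i := mul_le_mul_of_nonpos_right hle (le_of_lt hdi)
                have := hfd i hdi
                simp only [hc', his, if_pos]
                nlinarith [hfd i hdi, mul_le_mul_of_nonpos_right hle (le_of_lt hdi)]
              · have : 0 ≤ d i := not_lt.mp hdi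
                simp only [hc', his, if_pos]
                nlinarith [hc i]
            · simp [hc', his]
          have hc'i₀ : c' i₀ = 0 := by
            have his : i₀ ∈ s := hTs i₀ hi₀T
            simp only [hc', his, if_pos]
            have := hfd i₀ hdi₀
            rw [htdef, hti₀]
            linarith
          refine Set.mem_biUnion hi₀T ?_
          refine ⟨c', hc'nn, ?_⟩
          have hsum : ∑ i ∈ s, c' i • v i = ∑ i ∈ s, c i • v i := by
            have : ∀ i ∈ s, c' i • v i = c i • v i + t • (d i • v i) := by
              intro i hi
              simp only [hc', hi, if_pos, add_smul, smul_smul]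
            rw [Finset.sum_congr rfl this, Finset.sum_add_distrib, ← Finset.smul_sum, hdsum,
              smul_zero, add_zero]
          have herase : ∑ i ∈ s.erase i₀, c' i • v i = ∑ i ∈ s, c' i • v i := by
            rw [← Finset.sum_erase_add s _ (hTs i₀ hi₀T), hc'i₀, zero_smul, add_zero]
          rw [herase, hsum]
        · intro hx
          obtain ⟨i, hiT, c, hc, rfl⟩ := Set.mem_iUnion₂.mp hx
          refine ⟨fun k => if k = i then 0 else c k, ?_, ?_⟩
          · intro k
            by_cases h : k = i <;> simp [h, hc k]
          · symm
            rw [← Finset.sum_erase_add s _ (hTs i hiT)]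
            beta_reduce
            rw [if_pos rfl, zero_smul, add_zero]
            refine Finset.sum_congr rfl ?_
            intro k hk
            simp [Finset.ne_of_mem_erase hk]
      rw [key]
      refine Set.Finite.isClosed_biUnion T.finite_toSet ?_
      intro i hi
      exact ih (s.erase i) (Finset.erase_ssubset (hTs i hi))


variable {F : Type*} [NormedAddCommGroup F] [InnerProductSpace ℝ F] [FiniteDimensional ℝ F]

lemma cone_mem_or_sep (v : ι → F) (b : F) :
    (∃ c : ι → ℝ, (∀ i, 0 ≤ c i) ∧ b = ∑ i, c i • v i) ∨
      (∃ y : F, (∀ i, 0 ≤ ⟪v i, y⟫_ℝ) ∧ ⟪y, b⟫_ℝ < 0) := by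
  classical
  set C : ConvexCone ℝ F :=
    { carrier := coneSet v Finset.univ
      smul_mem' := by
        rintro r hr x ⟨c, hc, rfl⟩
        exact ⟨fun i => r * c i, fun i => mul_nonneg hr.le (hc i), by
          rw [Finset.smul_sum]; simp [smul_smul]⟩
      add_mem' := by
        rintro x ⟨a, ha, rfl⟩ y ⟨c, hc, rfl⟩
        exact ⟨fun i => a i + c i, fun i => add_nonneg (ha i) (hc i), by
          rw [← Finset.sum_add_distrib]; simp [add_smul]⟩ } with hC
  by_cases hb : b ∈ C
  · left
    obtain ⟨c, hc, rfl⟩ := hb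
    exact ⟨c, hc, rfl⟩
  · right
    have ne : (C : Set F).Nonempty := ⟨0, ⟨fun _ => 0, fun _ => le_refl _, by simp⟩⟩
    have hcl : IsClosed (C : Set F) := coneSet_isClosed v _
    let P : ProperCone ℝ F :=
      { carrier := coneSet v Finset.univ
        add_mem' := fun hx hy => C.add_mem' hx hy
        zero_mem' := ⟨fun _ => 0, fun _ => le_refl _, by simp⟩
        smul_mem' := by
          rintro r x ⟨c, hc, rfl⟩
          exact ⟨fun i => (r : ℝ) * c i, fun i => mul_nonneg r.2 (hc i), by
            show (r : ℝ) • ∑ i, c i • v i = _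
            rw [Finset.smul_sum]; simp [smul_smul]⟩
        isClosed' := hcl }
    obtain ⟨y, hy1, hy2⟩ := (show ∃ y, (∀ x ∈ coneSet v Finset.univ, 0 ≤ ⟪x, y⟫_ℝ) ∧ ⟪y, b⟫_ℝ < 0 from by
      obtain ⟨y, h1, h2⟩ := P.hyperplane_separation' (x₀ := b) hb
      exact ⟨y, h1, by rw [real_inner_comm]; exact h2⟩)
    refine ⟨y, fun i => ?_, hy2⟩
    refine hy1 (v i) ⟨fun j => if j = i then 1 else 0, fun j => by positivity, ?_⟩
    simp [ite_smul]


end ConeClosed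

theorem stmt1 (n : ℕ) (K : Matrix (Fin n) (Fin n) ℝ) (hK : K.transpose = -K) :
    ∃ x : Fin n → ℝ,
      (∀ i, 0 ≤ K.mulVec x i) ∧ (∀ i, 0 ≤ x i) ∧ (∀ i, 0 < x i + K.mulVec x i) := by
  classical
  have key : ∀ p : Fin n, ∃ x : Fin n → ℝ,
      (∀ i, 0 ≤ K.mulVec x i) ∧ (∀ i, 0 ≤ x i) ∧ 0 < x p + K.mulVec x p := by
    intro p
    set v : Fin n ⊕ Fin n → EuclideanSpace ℝ (Fin n) :=
      Sum.elim (fun j => (WithLp.toLp 2 (fun m => K j m) : EuclideanSpace ℝ (Fin n)))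
        (fun k => (WithLp.toLp 2 (fun m => if m = k then (1 : ℝ) else 0) : EuclideanSpace ℝ (Fin n))) with hv
    set b : EuclideanSpace ℝ (Fin n) := WithLp.toLp 2 (fun m => if m = p then (-1 : ℝ) else 0) with hb
    have sum_apply : ∀ (c : (Fin n ⊕ Fin n) → ℝ) (m : Fin n),
        (∑ i, c i • v i) m = ∑ i, c i * v i m := by
      intro c m
      have h := map_sum (PiLp.projₗ (𝕜 := ℝ) 2 (fun _ : Fin n => ℝ) m) (fun i => c i • v i)
        Finset.univ
      simpa using h
    rcases cone_mem_or_sep v b with ⟨c, hc, hbc⟩ | ⟨y, hy1, hy2⟩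
    · -- b is a conic combination: extract primal solution
      set a : Fin n → ℝ := fun j => c (Sum.inl j) with ha
      have hmv : ∀ m, K.mulVec a m = c (Sum.inr m) + (if m = p then 1 else 0) := by
        intro m
        have h1 : b m = ∑ i, c i * v i m := by rw [hbc]; exact sum_apply c m
        rw [Fintype.sum_sum_type] at h1
        have h2 : ∑ k, c (Sum.inr k) * v (Sum.inr k) m = c (Sum.inr m) := by
          simp [hv]
        have h3 : ∑ j, c (Sum.inl j) * v (Sum.inl j) m = -(K.mulVec a m) := by
          have : ∀ j, c (Sum.inl j) * v (Sum.inl j) m = K.transpose m j * a j := by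
            intro j; simp [hv, ha, Matrix.transpose_apply]; ring
          rw [Finset.sum_congr rfl (fun j _ => this j)]
          have : ∑ j, K.transpose m j * a j = K.transpose.mulVec a m := rfl
          rw [this, hK, Matrix.neg_mulVec]
          rfl
        have hbm : b m = if m = p then -1 else 0 := rfl
        rw [hbm, h3, h2] at h1
        by_cases hmp : m = p <;> simp [hmp] at h1 ⊢ <;> linarith
      refine ⟨a, fun i => ?_, fun i => hc _, ?_⟩
      · rw [hmv i]
        by_cases hip : i = p
        · rw [if_pos hip]
          have := hc (Sum.inr i)
          linarith
        · rw [if_neg hip, add_zero]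
          exact hc (Sum.inr i)
      · rw [hmv p, if_pos rfl]
        have h1 := hc (Sum.inr p)
        have h2 : 0 ≤ a p := hc (Sum.inl p)
        linarith
    · -- separating functional: it is itself a solution
      have hinner : ∀ (u w : EuclideanSpace ℝ (Fin n)), ⟪u, w⟫_ℝ = ∑ m, u m * w m := by
        intro u w
        simp [PiLp.inner_apply, RCLike.inner_apply, mul_comm]
      have hynn : ∀ k, 0 ≤ y k := by
        intro k
        have := hy1 (Sum.inr k)
        rw [hinner] at this
        simpa [hv] using this
      have hKy : ∀ j, 0 ≤ K.mulVec (fun m => y m) j := by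
        intro j
        have := hy1 (Sum.inl j)
        rw [hinner] at this
        simpa [hv, Matrix.mulVec, dotProduct] using this
      have hyp : 0 < y p := by
        rw [hinner] at hy2
        have : ∑ m, y m * b m = -(y p) := by simp [hb]
        rw [this] at hy2
        linarith
      exact ⟨fun m => y m, hKy, hynn, by have := hKy p; linarith⟩
  choose f hf1 hf2 hf3 using key
  refine ⟨∑ p, f p, ?_, ?_, ?_⟩
  · intro i
    have : K.mulVec (∑ p, f p) = ∑ p, K.mulVec (f p) := by
      simp only [← Matrix.mulVecLin_apply, map_sum]
    rw [this, Finset.sum_apply]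
    exact Finset.sum_nonneg fun p _ => hf1 p i
  · intro i
    rw [Finset.sum_apply]
    exact Finset.sum_nonneg fun p _ => hf2 p i
  · intro i
    have hmv : K.mulVec (∑ p, f p) = ∑ p, K.mulVec (f p) := by
      simp only [← Matrix.mulVecLin_apply, map_sum]
    rw [hmv, Finset.sum_apply, Finset.sum_apply, ← Finset.sum_add_distrib]
    refine Finset.sum_pos' (fun p _ => add_nonneg (hf2 p i) (hf1 p i)) ⟨i, Finset.mem_univ i, ?_⟩
    exact hf3 i
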